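/- arXiv:2310.08005 — 4 statements merged into one kernel-verified Lean document; each statement's English description precedes it below -/
import Mathlib

section
/- Let γ > 0, K₀ > 0 and C_E ≥ 0. Let f : [1,∞) → [0,∞) be a differentiable, non-increasing function satisfying the differential inequality f'(t) ≤ −K₀ f(t)^{1+γ} + C_E t^{−(1+γ)/γ} for all t ≥ 1. Then there exists a constant C, depending only on K₀, C_E, γ and f(1), such that f(t) ≤ C t^{−1/γ} for all t ≥ 1. -/
open Real Set

/-- Lemma 3.3 (continuous differential inequality with critical error term):
if `f : [1,∞) → [0,∞)` is differentiable, non-increasing, and satisfies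
`f'(t) ≤ -K₀ f(t)^{1+γ} + C_E t^{-(1+γ)/γ}`, then `f(t) ≤ C t^{-1/γ}`. -/
theorem continuous_differential_inequality
    (γ K₀ C_E : ℝ) (hγ : 0 < γ) (hK₀ : 0 < K₀) (hCE : 0 ≤ C_E)
    (f : ℝ → ℝ)
    (hf_nonneg : ∀ t, 1 ≤ t → 0 ≤ f t)
    (hf_diff : ∀ t, 1 ≤ t → DifferentiableAt ℝ f t)
    (hf_mono : ∀ s t, 1 ≤ s → s ≤ t → f t ≤ f s)
    (hf_ineq : ∀ t, 1 ≤ t →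
      deriv f t ≤ -K₀ * f t ^ (1 + γ) + C_E * t ^ (-(1 + γ) / γ)) :
    ∃ C : ℝ, ∀ t, 1 ≤ t → f t ≤ C * t ^ (-(1 / γ)) := by
  have h1γ : (0:ℝ) < 1 + γ := by linarith
  -- Key step: mean value theorem on [t, 2t]
  have key : ∀ t : ℝ, 1 ≤ t → K₀ * t * f (2*t) ^ (1+γ) ≤ f t + C_E * t ^ (-(1/γ)) := by
    intro t ht
    have ht0 : (0:ℝ) < t := lt_of_lt_of_le one_pos ht
    have hlt : t < 2*t := by linarith
    have hcont : ContinuousOn f (Icc t (2*t)) := fun x hx =>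
      ((hf_diff x (le_trans ht hx.1)).continuousAt).continuousWithinAt
    have hdiff : DifferentiableOn ℝ f (Ioo t (2*t)) := fun x hx =>
      ((hf_diff x (le_trans ht hx.1.le)).differentiableWithinAt)
    obtain ⟨ξ, hξ, hslope⟩ := exists_deriv_eq_slope f hlt hcont hdiff
    have hξ1 : 1 ≤ ξ := le_trans ht hξ.1.le
    have h1 := hf_ineq ξ hξ1
    have hmono1 : f (2*t) ≤ f ξ := hf_mono ξ (2*t) hξ1 hξ.2.le
    have hfn : 0 ≤ f (2*t) := hf_nonneg _ (by linarith)
    have hr1 : f (2*t) ^ (1+γ) ≤ f ξ ^ (1+γ) := rpow_le_rpow hfn hmono1 h1γ.le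
    have hr2 : ξ ^ (-(1+γ)/γ) ≤ t ^ (-(1+γ)/γ) :=
      rpow_le_rpow_of_nonpos ht0 hξ.1.le
        (div_nonpos_of_nonpos_of_nonneg (by linarith) hγ.le)
    have h2' : deriv f ξ ≤ -K₀ * f (2*t) ^ (1+γ) + C_E * t ^ (-(1+γ)/γ) := by
      have h3 := mul_le_mul_of_nonneg_left hr2 hCE
      nlinarith [mul_le_mul_of_nonneg_left hr1 hK₀.le]
    rw [hslope] at h2'
    have h4 : f (2*t) - f t ≤ (-K₀ * f (2*t) ^ (1+γ) + C_E * t ^ (-(1+γ)/γ)) * (2*t - t) := by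
      have := (div_le_iff₀ (by linarith : (0:ℝ) < 2*t - t)).mp h2'
      linarith
    have ht_pow : t * t ^ (-(1+γ)/γ) = t ^ (-(1/γ)) := by
      rw [show t * t ^ (-(1+γ)/γ) = t ^ (1:ℝ) * t ^ (-(1+γ)/γ) by rw [rpow_one],
        ← rpow_add ht0]
      congr 1
      field_simp
      ring
    nlinarith [h4, ht_pow]
  -- the constant
  set A : ℝ := (2:ℝ) ^ ((1+γ)/γ) / K₀ with hA_def
  have hA : 0 < A := div_pos (rpow_pos_of_pos two_pos _) hK₀
  set C₀ : ℝ := max (f 1) (max 1 ((A*(1+C_E)) ^ (1/γ))) with hC₀_def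
  have hC1 : (1:ℝ) ≤ C₀ := le_trans (le_max_left _ _) (le_max_right _ _)
  have hC₀pos : 0 < C₀ := lt_of_lt_of_le one_pos hC1
  have hCf : f 1 ≤ C₀ := le_max_left _ _
  have hACE : 0 ≤ A*(1+C_E) := by positivity
  have hCγ : A*(1+C_E) ≤ C₀ ^ γ := by
    have h5 : (A*(1+C_E)) ^ (1/γ) ≤ C₀ := le_trans (le_max_right _ _) (le_max_right _ _)
    calc A*(1+C_E) = ((A*(1+C_E)) ^ (1/γ)) ^ γ := by
          rw [← rpow_mul hACE, one_div, inv_mul_cancel₀ (ne_of_gt hγ), rpow_one]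
      _ ≤ C₀ ^ γ := rpow_le_rpow (rpow_nonneg hACE _) h5 hγ.le
  have h2pos : (0:ℝ) < (2:ℝ) ^ ((1+γ)/γ) := rpow_pos_of_pos two_pos _
  -- main consequence: C₀ + C_E ≤ K₀ * C₀^(1+γ) * 2^(-(1+γ)/γ)
  have hmain : C₀ + C_E ≤ K₀ * C₀ ^ (1+γ) * (2:ℝ) ^ (-(1+γ)/γ) := by
    have e1 : C₀ ^ (1+γ) = C₀ * C₀ ^ γ := by
      rw [rpow_add hC₀pos, rpow_one]
    have e2 : (2:ℝ) ^ (-(1+γ)/γ) = ((2:ℝ) ^ ((1+γ)/γ))⁻¹ := by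
      rw [show -(1+γ)/γ = -((1+γ)/γ) by ring, rpow_neg (by norm_num : (0:ℝ) ≤ 2)]
    have h6 : C₀ + C_E ≤ C₀ * (1 + C_E) := by nlinarith
    have h7 : C₀ * (A*(1+C_E)) ≤ C₀ * C₀ ^ γ := mul_le_mul_of_nonneg_left hCγ hC₀pos.le
    rw [hA_def] at h7
    rw [show C₀ * ((2:ℝ)^((1+γ)/γ)/K₀*(1+C_E)) = C₀*(1+C_E) * (2:ℝ)^((1+γ)/γ) / K₀ by ring] at h7
    have h9 : C₀ * (1+C_E) * (2:ℝ)^((1+γ)/γ) ≤ C₀ * C₀^γ * K₀ := (div_le_iff₀ hK₀).mp h7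
    have h10 : C₀ * (1+C_E) ≤ C₀ * C₀^γ * K₀ / (2:ℝ)^((1+γ)/γ) := (le_div_iff₀ h2pos).mpr h9
    rw [e1, e2]
    rw [div_eq_mul_inv] at h10
    nlinarith [h10]
  -- induction on dyadic scales
  have ind : ∀ n : ℕ, f ((2:ℝ)^n) ≤ C₀ * (2:ℝ) ^ (-(n:ℝ)/γ) := by
    intro n
    induction n with
    | zero => simpa using hCf
    | succ n ih =>
      have h2n1 : (1:ℝ) ≤ (2:ℝ)^n := one_le_pow₀ one_le_two
      have hk := key ((2:ℝ)^n) h2n1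
      rw [show (2:ℝ) * (2:ℝ)^n = (2:ℝ)^(n+1) by ring] at hk
      have hpow1 : ((2:ℝ)^n : ℝ) ^ (-(1/γ)) = (2:ℝ) ^ (-(n:ℝ)/γ) := by
        rw [← rpow_natCast (2:ℝ) n, ← rpow_mul (by norm_num : (0:ℝ) ≤ 2)]
        congr 1; ring
      rw [hpow1] at hk
      -- hk : K₀ * 2^n * f(2^(n+1))^(1+γ) ≤ f(2^n) + C_E * 2^(-n/γ)
      have step1 : K₀ * (2:ℝ)^n * f ((2:ℝ)^(n+1)) ^ (1+γ) ≤ (C₀ + C_E) * (2:ℝ)^(-(n:ℝ)/γ) := by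
        have := add_le_add ih (le_refl (C_E * (2:ℝ)^(-(n:ℝ)/γ)))
        calc K₀ * (2:ℝ)^n * f ((2:ℝ)^(n+1)) ^ (1+γ) ≤ f ((2:ℝ)^n) + C_E * (2:ℝ)^(-(n:ℝ)/γ) := hk
          _ ≤ C₀ * (2:ℝ)^(-(n:ℝ)/γ) + C_E * (2:ℝ)^(-(n:ℝ)/γ) := this
          _ = (C₀ + C_E) * (2:ℝ)^(-(n:ℝ)/γ) := by ring
      have step2 : (C₀ + C_E) * (2:ℝ)^(-(n:ℝ)/γ) ≤
          K₀ * (2:ℝ)^n * (C₀ * (2:ℝ)^(-((n:ℝ)+1)/γ)) ^ (1+γ) := by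
        have expand : (C₀ * (2:ℝ)^(-((n:ℝ)+1)/γ)) ^ (1+γ)
            = C₀ ^ (1+γ) * (2:ℝ) ^ ((-((n:ℝ)+1)/γ) * (1+γ)) := by
          rw [mul_rpow hC₀pos.le (rpow_pos_of_pos two_pos _).le,
            ← rpow_mul (by norm_num : (0:ℝ) ≤ 2)]
        rw [expand]
        have epow : (2:ℝ)^(n:ℕ) * (2:ℝ) ^ ((-((n:ℝ)+1)/γ) * (1+γ))
            = (2:ℝ) ^ (-(1+γ)/γ) * (2:ℝ)^(-(n:ℝ)/γ) := by
          rw [← rpow_natCast (2:ℝ) n, ← rpow_add two_pos, ← rpow_add two_pos]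
          congr 1; field_simp; ring
        calc (C₀ + C_E) * (2:ℝ)^(-(n:ℝ)/γ)
            ≤ (K₀ * C₀ ^ (1+γ) * (2:ℝ) ^ (-(1+γ)/γ)) * (2:ℝ)^(-(n:ℝ)/γ) :=
              mul_le_mul_of_nonneg_right hmain (rpow_pos_of_pos two_pos _).le
          _ = K₀ * C₀ ^ (1+γ) * ((2:ℝ) ^ (-(1+γ)/γ) * (2:ℝ)^(-(n:ℝ)/γ)) := by ring
          _ = K₀ * C₀ ^ (1+γ) * ((2:ℝ)^(n:ℕ) * (2:ℝ) ^ ((-((n:ℝ)+1)/γ) * (1+γ))) := by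
              rw [epow]
          _ = K₀ * (2:ℝ)^(n:ℕ) * (C₀ ^ (1+γ) * (2:ℝ) ^ ((-((n:ℝ)+1)/γ) * (1+γ))) := by ring
      have hle : f ((2:ℝ)^(n+1)) ^ (1+γ) ≤ (C₀ * (2:ℝ)^(-((n:ℝ)+1)/γ)) ^ (1+γ) := by
        have hpos : (0:ℝ) < K₀ * (2:ℝ)^n := by positivity
        have := step1.trans step2
        exact le_of_mul_le_mul_left (by linarith [this]) hpos
      have hfinal : f ((2:ℝ)^(n+1)) ≤ C₀ * (2:ℝ)^(-((n:ℝ)+1)/γ) := by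
        by_contra hcon
        push_neg at hcon
        have := rpow_lt_rpow (by positivity) hcon h1γ
        linarith
      calc f ((2:ℝ)^(n+1)) ≤ C₀ * (2:ℝ)^(-((n:ℝ)+1)/γ) := hfinal
        _ = C₀ * (2:ℝ)^(-((n+1:ℕ):ℝ)/γ) := by push_cast; ring_nf
  -- conclude for general t
  refine ⟨C₀ * (2:ℝ) ^ (1/γ), fun t ht => ?_⟩
  have ht0 : (0:ℝ) < t := lt_of_lt_of_le one_pos ht
  set n : ℕ := ⌊Real.logb 2 t⌋₊ with hn_def
  have hlogb : 0 ≤ Real.logb 2 t := logb_nonneg one_lt_two ht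
  have h2n_le : (2:ℝ)^n ≤ t := by
    calc (2:ℝ)^n = (2:ℝ) ^ ((n:ℝ)) := (rpow_natCast 2 n).symm
      _ ≤ (2:ℝ) ^ (Real.logb 2 t) := rpow_le_rpow_of_exponent_le one_le_two (Nat.floor_le hlogb)
      _ = t := rpow_logb two_pos (by norm_num) ht0
  have ht_le : t ≤ (2:ℝ) ^ (((n:ℝ)+1)) := by
    calc t = (2:ℝ) ^ (Real.logb 2 t) := (rpow_logb two_pos (by norm_num) ht0).symm
      _ ≤ (2:ℝ) ^ (((n:ℝ)+1)) := rpow_le_rpow_of_exponent_le one_le_two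
          (le_of_lt (Nat.lt_floor_add_one _))
  have h2n1 : (1:ℝ) ≤ (2:ℝ)^n := one_le_pow₀ one_le_two
  have hft : f t ≤ C₀ * (2:ℝ) ^ (-(n:ℝ)/γ) := le_trans (hf_mono _ _ h2n1 h2n_le) (ind n)
  have hpow : (2:ℝ) ^ (-(n:ℝ)/γ) = (2:ℝ) ^ (1/γ) * ((2:ℝ) ^ ((n:ℝ)+1)) ^ (-(1/γ)) := by
    rw [← rpow_mul (by norm_num : (0:ℝ) ≤ 2), ← rpow_add two_pos]
    congr 1; field_simp; ring
  have hcmp : ((2:ℝ) ^ ((n:ℝ)+1)) ^ (-(1/γ)) ≤ t ^ (-(1/γ)) :=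
    rpow_le_rpow_of_nonpos ht0 ht_le (neg_nonpos.mpr (by positivity))
  calc f t ≤ C₀ * (2:ℝ) ^ (-(n:ℝ)/γ) := hft
    _ = C₀ * ((2:ℝ) ^ (1/γ) * ((2:ℝ) ^ ((n:ℝ)+1)) ^ (-(1/γ))) := by rw [hpow]
    _ ≤ C₀ * ((2:ℝ) ^ (1/γ) * t ^ (-(1/γ))) := by
        apply mul_le_mul_of_nonneg_left _ hC₀pos.le
        exact mul_le_mul_of_nonneg_left hcmp (rpow_pos_of_pos two_pos _).le
    _ = C₀ * (2:ℝ) ^ (1/γ) * t ^ (-(1/γ)) := by ring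
end

section
/- Let γ > 0 and K > 0. Suppose f : [0,∞) → [0,∞) is non-increasing, and E : [1,∞) → [0,∞) satisfies t^{(γ+1)/γ} E(t) → 0 as t → ∞. If for every t ≥ 1 one has f(t)^{1+γ} ≤ K (f(t−1) − f(t+1)) + E(t), then there exists a constant C such that f(t) ≤ C t^{−1/γ} for all t ≥ 1. -/
open Real Filter Set

/-- MVT drop estimate: `x^(-q) - (x+1)^(-q) ≤ q * x^(-q-1)` for `x ≥ 1`, `q > 0`. -/
lemma key_drop (q : ℝ) (hq : 0 < q) {x : ℝ} (hx : 1 ≤ x) :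
    x ^ (-q) - (x + 1) ^ (-q) ≤ q * x ^ (-q - 1) := by
  have hx0 : (0:ℝ) < x := lt_of_lt_of_le one_pos hx
  obtain ⟨c, hc, hceq⟩ := exists_hasDerivAt_eq_slope (fun t : ℝ => t ^ (-q))
      (fun t : ℝ => (-q) * t ^ (-q - 1)) (by linarith : x < x + 1)
      (fun t ht => (Real.hasDerivAt_rpow_const
        (Or.inl (ne_of_gt (by have := ht.1; linarith : (0:ℝ) < t)))).continuousAt.continuousWithinAt)
      (fun t ht => Real.hasDerivAt_rpow_const
        (Or.inl (ne_of_gt (by have := ht.1; linarith : (0:ℝ) < t))))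
  have hcx : x < c := hc.1
  have hc0 : 0 < c := lt_trans hx0 hcx
  have h1 : (x:ℝ) + 1 - x = 1 := by ring
  rw [h1, div_one] at hceq
  have h2 : x ^ (-q) - (x + 1) ^ (-q) = q * c ^ (-q - 1) := by nlinarith [hceq]
  rw [h2]
  exact mul_le_mul_of_nonneg_left
    (Real.rpow_le_rpow_of_nonpos hx0 hcx.le (by linarith)) hq.le

/-- Decay for a sequence satisfying the discrete Łojasiewicz recurrence. -/
lemma seq_decay (γ K : ℝ) (hγ : 0 < γ) (hK : 0 < K) (b : ℕ → ℝ) (N : ℕ) (hN1 : 1 ≤ N)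
    (hb_nonneg : ∀ n, 1 ≤ n → 0 ≤ b n)
    (hb_le : ∀ n, 1 ≤ n → b n ≤ b 1)
    (hrec : ∀ n, N ≤ n →
      b (n+1) ^ (1+γ) ≤ K * (b n - b (n+1)) + (n:ℝ) ^ (-((γ+1)/γ))) :
    ∃ C : ℝ, 0 < C ∧ ∀ n, 1 ≤ n → b n ≤ C * (n:ℝ) ^ (-(1/γ)) := by
  set p : ℝ := (γ + 1) / γ with hp_def
  have hp_pos : 0 < p := by positivity
  have hq_pos : 0 < 1 / γ := by positivity
  have hqp : -(1 / γ) - 1 = -p := by rw [hp_def]; field_simp; ring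
  set B : ℝ := 2 ^ p * (K / γ + 1) with hB_def
  have hB_pos : 0 < B := by positivity
  set C : ℝ := max (max 1 (B ^ (1 / γ))) (b 1 * (N:ℝ) ^ (1 / γ)) with hC_def
  have hC1 : (1:ℝ) ≤ C := le_trans (le_max_left _ _) (le_max_left _ _)
  have hC0 : (0:ℝ) < C := lt_of_lt_of_le one_pos hC1
  have hCγ : 2 ^ p * (K * C / γ + 1) ≤ C ^ (1 + γ) := by
    have hCB : B ^ (1 / γ) ≤ C := le_trans (le_max_right _ _) (le_max_left _ _)
    have hCg : B ≤ C ^ γ := by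
      have h := Real.rpow_le_rpow (by positivity : (0:ℝ) ≤ B ^ (1/γ)) hCB hγ.le
      rwa [← Real.rpow_mul hB_pos.le, one_div, inv_mul_cancel₀ hγ.ne',
        Real.rpow_one] at h
    have h1γ : C ^ (1 + γ) = C * C ^ γ := by
      rw [Real.rpow_add hC0, Real.rpow_one]
    rw [h1γ]
    calc 2 ^ p * (K * C / γ + 1) ≤ 2 ^ p * (K * C / γ + C) := by gcongr
      _ = C * B := by rw [hB_def]; ring
      _ ≤ C * C ^ γ := mul_le_mul_of_nonneg_left hCg hC0.le
  have hbase : ∀ n : ℕ, 1 ≤ n → n ≤ N → b n ≤ C * (n:ℝ) ^ (-(1/γ)) := by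
    intro n hn hnN
    have hn1 : (1:ℝ) ≤ (n:ℝ) := by exact_mod_cast hn
    have hnN' : (n:ℝ) ≤ (N:ℝ) := by exact_mod_cast hnN
    have hb1 : 0 ≤ b 1 := hb_nonneg 1 le_rfl
    have hCf : b 1 * (n:ℝ) ^ (1/γ) ≤ C := by
      refine le_trans ?_ (le_max_right _ _)
      exact mul_le_mul_of_nonneg_left
        (Real.rpow_le_rpow (by linarith) hnN' hq_pos.le) hb1
    have hzero : (1/γ) + -(1/γ) = 0 := by ring
    have hmul : b 1 = b 1 * (n:ℝ) ^ (1/γ) * (n:ℝ) ^ (-(1/γ)) := by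
      rw [mul_assoc, ← Real.rpow_add (by linarith : (0:ℝ) < (n:ℝ)), hzero,
        Real.rpow_zero, mul_one]
    calc b n ≤ b 1 := hb_le n hn
      _ = b 1 * (n:ℝ) ^ (1/γ) * (n:ℝ) ^ (-(1/γ)) := hmul
      _ ≤ C * (n:ℝ) ^ (-(1/γ)) := mul_le_mul_of_nonneg_right hCf (by positivity)
  refine ⟨C, hC0, ?_⟩
  intro n
  induction n with
  | zero => omega
  | succ m ih =>
    intro _
    by_cases hmN : m + 1 ≤ N
    · exact hbase (m+1) (by omega) hmN
    · have hmN' : N ≤ m := by omega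
      have hm1 : 1 ≤ m := le_trans hN1 hmN'
      have hm1' : (1:ℝ) ≤ (m:ℝ) := by exact_mod_cast hm1
      have hIH := ih hm1
      by_contra hcon
      push_neg at hcon
      have hm1pos : (0:ℝ) < (m:ℝ) + 1 := by linarith
      have hcast : ((m + 1 : ℕ) : ℝ) = (m:ℝ) + 1 := by push_cast; ring
      rw [hcast] at hcon
      have hA_pos : (0:ℝ) < ((m:ℝ) + 1) ^ (-(1/γ)) := Real.rpow_pos_of_pos hm1pos _
      have hlhs : (C * ((m:ℝ) + 1) ^ (-(1/γ))) ^ (1 + γ) < b (m+1) ^ (1 + γ) :=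
        Real.rpow_lt_rpow (by positivity) hcon (by linarith)
      have hexp : -(1/γ) * (1 + γ) = -p := by rw [hp_def]; field_simp; ring
      have hlhs_eq : (C * ((m:ℝ) + 1) ^ (-(1/γ))) ^ (1 + γ)
          = C ^ (1 + γ) * ((m:ℝ) + 1) ^ (-p) := by
        rw [Real.mul_rpow hC0.le hA_pos.le, ← Real.rpow_mul hm1pos.le, hexp]
      have hdrop : (m:ℝ) ^ (-(1/γ)) - ((m:ℝ) + 1) ^ (-(1/γ)) ≤ (1/γ) * (m:ℝ) ^ (-p) := by
        have h := key_drop (1/γ) hq_pos hm1'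
        rwa [hqp] at h
      have hKd : K * (b m - b (m+1)) ≤ K * C * (1/γ) * (m:ℝ) ^ (-p) := by
        have h1 : b m - b (m+1) ≤ C * ((m:ℝ) ^ (-(1/γ)) - ((m:ℝ) + 1) ^ (-(1/γ))) := by
          nlinarith [hIH, hcon]
        calc K * (b m - b (m+1))
            ≤ K * (C * ((m:ℝ) ^ (-(1/γ)) - ((m:ℝ) + 1) ^ (-(1/γ)))) :=
              mul_le_mul_of_nonneg_left h1 hK.le
          _ ≤ K * (C * ((1/γ) * (m:ℝ) ^ (-p))) :=
              mul_le_mul_of_nonneg_left (mul_le_mul_of_nonneg_left hdrop hC0.le) hK.le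
          _ = K * C * (1/γ) * (m:ℝ) ^ (-p) := by ring
      have hrec' := hrec m hmN'
      have hsum : b (m+1) ^ (1 + γ) ≤ (K * C / γ + 1) * (m:ℝ) ^ (-p) := by
        calc b (m+1) ^ (1 + γ) ≤ K * (b m - b (m+1)) + (m:ℝ) ^ (-p) := hrec'
          _ ≤ K * C * (1/γ) * (m:ℝ) ^ (-p) + (m:ℝ) ^ (-p) :=
              add_le_add hKd le_rfl
          _ = (K * C / γ + 1) * (m:ℝ) ^ (-p) := by ring
      have hdouble : (m:ℝ) ^ (-p) ≤ 2 ^ p * ((m:ℝ) + 1) ^ (-p) := by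
        have h2m : (m:ℝ) + 1 ≤ 2 * (m:ℝ) := by linarith
        have hmono := Real.rpow_le_rpow_of_nonpos
          (by linarith : (0:ℝ) < (m:ℝ) + 1) h2m (by linarith : -p ≤ 0)
        have hpp : p + -p = 0 := by ring
        calc (m:ℝ) ^ (-p) = 2 ^ p * ((2:ℝ) ^ (-p) * (m:ℝ) ^ (-p)) := by
              rw [← mul_assoc, ← Real.rpow_add two_pos, hpp, Real.rpow_zero, one_mul]
          _ = 2 ^ p * (2 * (m:ℝ)) ^ (-p) := by
              rw [Real.mul_rpow (by norm_num : (0:ℝ) ≤ 2) (by linarith : (0:ℝ) ≤ (m:ℝ))]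
          _ ≤ 2 ^ p * ((m:ℝ) + 1) ^ (-p) :=
              mul_le_mul_of_nonneg_left hmono (by positivity)
      have hfinal : C ^ (1 + γ) * ((m:ℝ) + 1) ^ (-p)
          < 2 ^ p * (K * C / γ + 1) * ((m:ℝ) + 1) ^ (-p) := by
        calc C ^ (1 + γ) * ((m:ℝ) + 1) ^ (-p)
            = (C * ((m:ℝ) + 1) ^ (-(1/γ))) ^ (1 + γ) := hlhs_eq.symm
          _ < b (m+1) ^ (1 + γ) := hlhs
          _ ≤ (K * C / γ + 1) * (m:ℝ) ^ (-p) := hsum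
          _ ≤ (K * C / γ + 1) * (2 ^ p * ((m:ℝ) + 1) ^ (-p)) :=
              mul_le_mul_of_nonneg_left hdouble (by positivity)
          _ = 2 ^ p * (K * C / γ + 1) * ((m:ℝ) + 1) ^ (-p) := by ring
      have hApos : (0:ℝ) < ((m:ℝ) + 1) ^ (-p) := Real.rpow_pos_of_pos hm1pos _
      have := lt_of_mul_lt_mul_right hfinal hApos.le
      linarith [hCγ]

/-- Lemma A.1 (discrete differential inequality): if `f : [0,∞) → [0,∞)` is
non-increasing, `E ≥ 0` with `t^{(γ+1)/γ} E(t) → 0`, and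
`f(t)^{1+γ} ≤ K (f(t-1) - f(t+1)) + E(t)` for `t ≥ 1`, then `f(t) ≤ C t^{-1/γ}`. -/
theorem discrete_differential_inequality
    (γ K : ℝ) (hγ : 0 < γ) (hK : 0 < K)
    (f E : ℝ → ℝ)
    (hf_nonneg : ∀ t, 0 ≤ t → 0 ≤ f t)
    (hf_mono : ∀ s t, 0 ≤ s → s ≤ t → f t ≤ f s)
    (hE_nonneg : ∀ t, 1 ≤ t → 0 ≤ E t)
    (hE_decay :
      Filter.Tendsto (fun t : ℝ => t ^ ((γ + 1) / γ) * E t) Filter.atTop (nhds 0))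
    (hrec : ∀ t, 1 ≤ t → f t ^ (1 + γ) ≤ K * (f (t - 1) - f (t + 1)) + E t) :
    ∃ C : ℝ, ∀ t, 1 ≤ t → f t ≤ C * t ^ (-(1 / γ)) := by
  have hq_pos : 0 < 1 / γ := by positivity
  have hp_pos : 0 < (γ + 1) / γ := by positivity
  -- eventual bound on E
  obtain ⟨T, hT⟩ := Filter.eventually_atTop.mp
    (hE_decay.eventually (eventually_le_nhds one_pos))
  set N : ℕ := max 1 ⌈T⌉₊ with hN_def
  have hN1 : 1 ≤ N := le_max_left _ _
  have hNT : T ≤ (N : ℝ) :=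
    le_trans (Nat.le_ceil T) (by exact_mod_cast le_max_right 1 ⌈T⌉₊)
  -- E (2n) ≤ n^(-p) for n ≥ N
  have hE2 : ∀ n : ℕ, N ≤ n → E (2 * (n:ℝ)) ≤ (n : ℝ) ^ (-((γ + 1) / γ)) := by
    intro n hn
    have hnN : (N:ℝ) ≤ (n:ℝ) := by exact_mod_cast hn
    have hn1 : (1:ℝ) ≤ (n:ℝ) := le_trans (by exact_mod_cast hN1) hnN
    have h2n_pos : (0:ℝ) < 2 * (n:ℝ) := by linarith
    have hb := hT (2 * (n:ℝ)) (by linarith)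
    have hx : (0:ℝ) < (2 * (n:ℝ)) ^ ((γ + 1) / γ) := Real.rpow_pos_of_pos h2n_pos _
    have hEb : E (2 * (n:ℝ)) ≤ (2 * (n:ℝ)) ^ (-((γ + 1) / γ)) := by
      rw [Real.rpow_neg h2n_pos.le]
      calc E (2 * (n:ℝ))
          = ((2 * (n:ℝ)) ^ ((γ + 1) / γ))⁻¹ * ((2 * (n:ℝ)) ^ ((γ + 1) / γ) * E (2 * (n:ℝ))) := by
            field_simp
        _ ≤ ((2 * (n:ℝ)) ^ ((γ + 1) / γ))⁻¹ * 1 :=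
            mul_le_mul_of_nonneg_left hb (by positivity)
        _ = ((2 * (n:ℝ)) ^ ((γ + 1) / γ))⁻¹ := mul_one _
    exact hEb.trans
      (Real.rpow_le_rpow_of_nonpos (by linarith) (by linarith) (by linarith))
  -- the sequence b n = f (2n - 1)
  obtain ⟨C, hC0, hC⟩ := seq_decay γ K hγ hK (fun n => f (2 * (n:ℝ) - 1)) N hN1
    (fun n hn => hf_nonneg _ (by
      have : (1:ℝ) ≤ (n:ℝ) := by exact_mod_cast hn
      linarith))
    (fun n hn => by
      have : (1:ℝ) ≤ (n:ℝ) := by exact_mod_cast hn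
      have h1 : (2 * ((1:ℕ):ℝ) - 1) = 1 := by norm_num
      simp only [h1]
      exact hf_mono 1 _ one_pos.le (by linarith))
    (fun n hn => by
      have hNn : (N:ℝ) ≤ (n:ℝ) := by exact_mod_cast hn
      have hN1' : (1:ℝ) ≤ (N:ℝ) := by exact_mod_cast hN1
      have hn1 : (1:ℝ) ≤ (n:ℝ) := le_trans hN1' hNn
      show f (2 * ((n + 1 : ℕ):ℝ) - 1) ^ (1 + γ) ≤
        K * (f (2 * (n:ℝ) - 1) - f (2 * ((n + 1 : ℕ):ℝ) - 1)) + (n:ℝ) ^ (-((γ + 1) / γ))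
      have harg : 2 * (((n : ℕ) + 1 : ℕ):ℝ) - 1 = 2 * (n:ℝ) + 1 := by push_cast; ring
      rw [harg]
      have hr := hrec (2 * (n:ℝ)) (by linarith)
      have hle : f (2 * (n:ℝ) + 1) ≤ f (2 * (n:ℝ)) :=
        hf_mono _ _ (by linarith) (by linarith)
      have hpow : f (2 * (n:ℝ) + 1) ^ (1 + γ) ≤ f (2 * (n:ℝ)) ^ (1 + γ) :=
        Real.rpow_le_rpow (hf_nonneg _ (by linarith)) hle (by linarith)
      calc f (2 * (n:ℝ) + 1) ^ (1 + γ) ≤ f (2 * (n:ℝ)) ^ (1 + γ) := hpow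
        _ ≤ K * (f (2 * (n:ℝ) - 1) - f (2 * (n:ℝ) + 1)) + E (2 * (n:ℝ)) := hr
        _ ≤ K * (f (2 * (n:ℝ) - 1) - f (2 * (n:ℝ) + 1)) + (n:ℝ) ^ (-((γ + 1) / γ)) := by
            have := hE2 n hn
            linarith)
  -- transfer to real t
  refine ⟨C * 3 ^ (1/γ), fun t ht => ?_⟩
  set n : ℕ := ⌊(t + 1) / 2⌋₊ with hn_def
  have ht0 : (0:ℝ) < t := by linarith
  have hn1 : 1 ≤ n := Nat.le_floor (by push_cast; linarith)
  have hn1' : (1:ℝ) ≤ (n:ℝ) := by exact_mod_cast hn1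
  have hfl : (n:ℝ) ≤ (t + 1) / 2 := Nat.floor_le (by linarith)
  have hfl2 : (t + 1) / 2 < (n:ℝ) + 1 := Nat.lt_floor_add_one _
  have h2n1 : 2 * (n:ℝ) - 1 ≤ t := by linarith
  have ht3n : t ≤ 3 * (n:ℝ) := by linarith
  have hfa : f t ≤ f (2 * (n:ℝ) - 1) := hf_mono (2 * (n:ℝ) - 1) t (by linarith) h2n1
  have hna : f (2 * (n:ℝ) - 1) ≤ C * (n:ℝ) ^ (-(1/γ)) := hC n hn1
  have hnt : (n:ℝ) ^ (-(1/γ)) ≤ (t / 3) ^ (-(1/γ)) :=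
    Real.rpow_le_rpow_of_nonpos (by positivity) (by linarith) (by linarith)
  have ht3 : (t / 3) ^ (-(1/γ)) = 3 ^ (1/γ) * t ^ (-(1/γ)) := by
    rw [Real.div_rpow ht0.le (by norm_num : (0:ℝ) ≤ 3), Real.rpow_neg ht0.le,
      Real.rpow_neg (by norm_num : (0:ℝ) ≤ 3)]
    field_simp
  calc f t ≤ f (2 * (n:ℝ) - 1) := hfa
    _ ≤ C * (n:ℝ) ^ (-(1/γ)) := hna
    _ ≤ C * (t / 3) ^ (-(1/γ)) := mul_le_mul_of_nonneg_left hnt hC0.le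
    _ = C * 3 ^ (1/γ) * t ^ (-(1/γ)) := by rw [ht3]; ring
end

section
/- Let ρ > 1 and C > 0, and let (δ_j)_{j≥1} be a sequence of non-negative real numbers such that for every j ≥ 1 the tail bound ∑_{i=j}^∞ δ_i² ≤ C j^{−ρ} holds. Then there exists ᾱ ∈ (0,1) such that ∑_{j=1}^∞ δ_j^{ᾱ} < ∞. -/
open Finset

/-- Pointwise Young-type bound: for `0 ≤ x`, `0 < s`, `0 < α < 2`,
`x ^ α ≤ x ^ 2 * s ^ (α - 2) + s ^ α` (real powers). -/
private lemma pointwise_rpow_bound {x s α : ℝ} (hx : 0 ≤ x) (hs : 0 < s)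
    (hα0 : 0 < α) (hα2 : α < 2) :
    x ^ α ≤ x ^ 2 * s ^ (α - 2) + s ^ α := by
  rcases le_or_gt x s with h | h
  · have h1 : x ^ α ≤ s ^ α := Real.rpow_le_rpow hx h hα0.le
    have h2 : (0:ℝ) ≤ x ^ 2 * s ^ (α - 2) := by positivity
    linarith
  · have hx0 : 0 < x := hs.trans h
    have hxα : x ^ α = x ^ 2 * x ^ (α - 2) := by
      rw [show x ^ 2 = x ^ (2:ℝ) by
        rw [show (2:ℝ) = ((2:ℕ):ℝ) by norm_num, Real.rpow_natCast],
        ← Real.rpow_add hx0]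
      norm_num
    have h1 : x ^ (α - 2) ≤ s ^ (α - 2) :=
      Real.rpow_le_rpow_of_nonpos hs h.le (by linarith)
    have h2 : x ^ 2 * x ^ (α - 2) ≤ x ^ 2 * s ^ (α - 2) :=
      mul_le_mul_of_nonneg_left h1 (by positivity)
    have h3 : (0:ℝ) ≤ s ^ α := by positivity
    linarith [hxα ▸ h2]

/-- Lemma A.2: polynomial decay of ℓ² tails (exponent ρ > 1) of a non-negative
sequence implies summability of some power ᾱ < 1 of the sequence. -/
theorem tail_decay_implies_power_summable
    (ρ C : ℝ) (hρ : 1 < ρ) (hC : 0 < C)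
    (δ : ℕ → ℝ) (hδ : ∀ j, 0 ≤ δ j)
    (hsum : Summable (fun i => δ i ^ 2))
    (htail : ∀ j : ℕ, 1 ≤ j → (∑' i : ℕ, δ (j + i) ^ 2) ≤ C * (j : ℝ) ^ (-ρ)) :
    ∃ α : ℝ, 0 < α ∧ α < 1 ∧ Summable (fun j => δ j ^ α) := by
  have hρ0 : (0:ℝ) < ρ := by linarith
  -- choose the exponent α
  set α : ℝ := (2 / (ρ + 1) + 1) / 2 with hα_def
  have hβ0 : 0 < 2 / (ρ + 1) := by positivity
  have hβ1 : 2 / (ρ + 1) < 1 := by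
    rw [div_lt_one (by linarith)]; linarith
  have hα0 : 0 < α := by simp only [hα_def]; linarith
  have hα1 : α < 1 := by simp only [hα_def]; linarith
  have hα2 : α < 2 := by linarith
  have h2α : 0 < 2 - α := by linarith
  have hkey : 2 - α < α * ρ := by
    have hβα : 2 / (ρ + 1) < α := by simp only [hα_def]; linarith
    have : 2 < α * (ρ + 1) := by
      rw [div_lt_iff₀ (by linarith : (0:ℝ) < ρ + 1)] at hβα
      linarith [hβα]
    nlinarith
  -- choose the weight exponent τ
  set τ : ℝ := (1 / α + ρ / (2 - α)) / 2 with hτ_def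
  have hτ1 : 1 < τ * α := by
    have h1 : τ * α = (1 + ρ * α / (2 - α)) / 2 := by
      rw [hτ_def]; field_simp
    have h2 : 1 < ρ * α / (2 - α) := by
      rw [lt_div_iff₀ h2α]; nlinarith
    rw [h1]; linarith
  have hτ2 : τ * (2 - α) < ρ := by
    have h1 : τ * (2 - α) = ((2 - α) / α + ρ) / 2 := by
      rw [hτ_def]; field_simp
    have h2 : (2 - α) / α < ρ := by
      rw [div_lt_iff₀ hα0]; nlinarith
    rw [h1]; linarith
  set e1 : ℝ := ρ - τ * (2 - α) with he1_def
  set e2 : ℝ := τ * α - 1 with he2_def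
  have he1 : 0 < e1 := by simp only [he1_def]; linarith
  have he2 : 0 < e2 := by simp only [he2_def]; linarith
  set r1 : ℝ := (2:ℝ) ^ (-e1) with hr1_def
  set r2 : ℝ := (2:ℝ) ^ (-e2) with hr2_def
  have hr1_0 : 0 < r1 := Real.rpow_pos_of_pos two_pos _
  have hr2_0 : 0 < r2 := Real.rpow_pos_of_pos two_pos _
  have hr1_1 : r1 < 1 := Real.rpow_lt_one_of_one_lt_of_neg one_lt_two (by linarith)
  have hr2_1 : r2 < 1 := Real.rpow_lt_one_of_one_lt_of_neg one_lt_two (by linarith)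
  -- block estimate
  have hblock : ∀ k : ℕ, ∑ j ∈ Finset.Ico (2 ^ k) (2 ^ (k + 1)), δ j ^ α
      ≤ C * r1 ^ k + r2 ^ k := by
    intro k
    set m : ℕ := 2 ^ k with hm_def
    have hm1 : 1 ≤ m := Nat.one_le_two_pow
    set s : ℝ := (2:ℝ) ^ (-(k:ℝ) * τ) with hs_def
    have hs0 : 0 < s := Real.rpow_pos_of_pos two_pos _
    have step1 : ∑ j ∈ Finset.Ico m (2 ^ (k + 1)), δ j ^ α
        ≤ ∑ j ∈ Finset.Ico m (2 ^ (k + 1)), (δ j ^ 2 * s ^ (α - 2) + s ^ α) :=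
      Finset.sum_le_sum fun j _ => pointwise_rpow_bound (hδ j) hs0 hα0 hα2
    have hcard : (Finset.Ico m (2 ^ (k + 1))).card = m := by
      rw [Nat.card_Ico, hm_def, pow_succ]; omega
    have step2 : ∑ j ∈ Finset.Ico m (2 ^ (k + 1)), (δ j ^ 2 * s ^ (α - 2) + s ^ α)
        = (∑ j ∈ Finset.Ico m (2 ^ (k + 1)), δ j ^ 2) * s ^ (α - 2) + (m:ℝ) * s ^ α := by
      rw [Finset.sum_add_distrib, ← Finset.sum_mul, Finset.sum_const, hcard,
        nsmul_eq_mul]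
    -- tail bound on the block
    have hshift : Summable (fun i => δ (m + i) ^ 2) := by
      have := (summable_nat_add_iff (f := fun i => δ i ^ 2) m).2 hsum
      simpa [add_comm] using this
    have step3 : ∑ j ∈ Finset.Ico m (2 ^ (k + 1)), δ j ^ 2 ≤ C * (m:ℝ) ^ (-ρ) := by
      have h1 : ∑ j ∈ Finset.Ico m (2 ^ (k + 1)), δ j ^ 2
          = ∑ i ∈ Finset.range (2 ^ (k + 1) - m), δ (m + i) ^ 2 :=
        Finset.sum_Ico_eq_sum_range _ _ _
      rw [h1]
      calc ∑ i ∈ Finset.range (2 ^ (k + 1) - m), δ (m + i) ^ 2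
          ≤ ∑' i : ℕ, δ (m + i) ^ 2 :=
            hshift.sum_le_tsum _ (fun i _ => sq_nonneg _)
        _ ≤ C * (m:ℝ) ^ (-ρ) := htail m hm1
    -- rpow arithmetic
    have hm_real : (m:ℝ) = (2:ℝ) ^ ((k:ℝ)) := by
      rw [hm_def]; push_cast; rw [← Real.rpow_natCast 2 k]
    have hs_pow : ∀ c : ℝ, s ^ c = (2:ℝ) ^ (-(k:ℝ) * τ * c) := by
      intro c; rw [hs_def, ← Real.rpow_mul (by norm_num)]
    have hterm1 : C * (m:ℝ) ^ (-ρ) * s ^ (α - 2) = C * r1 ^ k := by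
      rw [hm_real, ← Real.rpow_mul (by norm_num), hs_pow,
        mul_assoc, ← Real.rpow_add two_pos, hr1_def,
        ← Real.rpow_natCast ((2:ℝ) ^ (-e1)) k, ← Real.rpow_mul (by norm_num)]
      congr 1
      simp only [he1_def]; ring
    have hterm2 : (m:ℝ) * s ^ α = r2 ^ k := by
      rw [hm_real, hs_pow, ← Real.rpow_add two_pos, hr2_def,
        ← Real.rpow_natCast ((2:ℝ) ^ (-e2)) k, ← Real.rpow_mul (by norm_num)]
      congr 1
      simp only [he2_def]; ring
    calc ∑ j ∈ Finset.Ico m (2 ^ (k + 1)), δ j ^ α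
        ≤ (∑ j ∈ Finset.Ico m (2 ^ (k + 1)), δ j ^ 2) * s ^ (α - 2) + (m:ℝ) * s ^ α := by
          rw [← step2]; exact step1
      _ ≤ C * (m:ℝ) ^ (-ρ) * s ^ (α - 2) + (m:ℝ) * s ^ α := by
          have : (0:ℝ) ≤ s ^ (α - 2) := by positivity
          nlinarith [step3]
      _ = C * r1 ^ k + r2 ^ k := by rw [hterm1, hterm2]
  -- partial sums over dyadic ranges
  have hdyadic : ∀ K : ℕ, ∑ j ∈ Finset.range (2 ^ K), δ j ^ α
      ≤ δ 0 ^ α + ∑ k ∈ Finset.range K, (C * r1 ^ k + r2 ^ k) := by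
    intro K
    induction K with
    | zero => simp
    | succ K ih =>
      have hsplit : ∑ j ∈ Finset.range (2 ^ (K + 1)), δ j ^ α
          = ∑ j ∈ Finset.range (2 ^ K), δ j ^ α
            + ∑ j ∈ Finset.Ico (2 ^ K) (2 ^ (K + 1)), δ j ^ α := by
        rw [Finset.range_eq_Ico, Finset.range_eq_Ico]
        exact (Finset.sum_Ico_consecutive _ (Nat.zero_le _)
          (Nat.pow_le_pow_right (by norm_num : 2 > 0) (Nat.le_succ K))).symm
      rw [hsplit, Finset.sum_range_succ]
      linarith [hblock K, ih]
  -- geometric bounds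
  have hg1 : ∀ K : ℕ, ∑ k ∈ Finset.range K, r1 ^ k ≤ (1 - r1)⁻¹ := by
    intro K
    have h := (summable_geometric_of_lt_one hr1_0.le hr1_1).sum_le_tsum (Finset.range K)
      (fun i _ => pow_nonneg hr1_0.le i)
    rwa [tsum_geometric_of_lt_one hr1_0.le hr1_1] at h
  have hg2 : ∀ K : ℕ, ∑ k ∈ Finset.range K, r2 ^ k ≤ (1 - r2)⁻¹ := by
    intro K
    have h := (summable_geometric_of_lt_one hr2_0.le hr2_1).sum_le_tsum (Finset.range K)
      (fun i _ => pow_nonneg hr2_0.le i)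
    rwa [tsum_geometric_of_lt_one hr2_0.le hr2_1] at h
  refine ⟨α, hα0, hα1, ?_⟩
  apply summable_of_sum_range_le (c := δ 0 ^ α + (C * (1 - r1)⁻¹ + (1 - r2)⁻¹))
    (fun j => Real.rpow_nonneg (hδ j) α)
  intro N
  have hNle : N ≤ 2 ^ N := Nat.le_of_lt (Nat.lt_two_pow_self)
  have hmono : ∑ j ∈ Finset.range N, δ j ^ α ≤ ∑ j ∈ Finset.range (2 ^ N), δ j ^ α :=
    Finset.sum_le_sum_of_subset_of_nonneg (Finset.range_subset_range.2 hNle)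
      (fun j _ _ => Real.rpow_nonneg (hδ j) α)
  have hgeom : ∑ k ∈ Finset.range N, (C * r1 ^ k + r2 ^ k)
      ≤ C * (1 - r1)⁻¹ + (1 - r2)⁻¹ := by
    rw [Finset.sum_add_distrib, ← Finset.mul_sum]
    have h1 : C * ∑ k ∈ Finset.range N, r1 ^ k ≤ C * (1 - r1)⁻¹ :=
      mul_le_mul_of_nonneg_left (hg1 N) hC.le
    have h2 := hg2 N
    linarith
  linarith [hdyadic N, hmono, hgeom]
end

section
/- Let γ ∈ (0,1), C₀ > 0 and t₀ ≥ 1. Let f : [t₀,∞) → ℝ be continuously differentiable, non-increasing, and satisfy 0 ≤ f(t) ≤ C₀ t^{−1/γ} for all t ≥ t₀. Then there exists a constant C₁, depending only on C₀ and γ, such that for all t₀ ≤ t₁ ≤ t₂ one has ∫_{t₁}^{t₂} √(−f'(t)) dt ≤ C₁ t₁^{−(1/γ−1)/2}. -/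
open MeasureTheory intervalIntegral Filter Set Topology

/-- Analytic core of Theorem 3.4: if `f` is C¹, non-increasing with
`0 ≤ f(t) ≤ C₀ t^{-1/γ}`, then `∫_{t₁}^{t₂} √(-f') ≤ C₁ t₁^{-(1/γ-1)/2}`,
with `C₁` depending only on `C₀` and `γ`. -/
theorem sqrt_deriv_integral_bound
    (γ C₀ : ℝ) (hγ0 : 0 < γ) (hγ1 : γ < 1) (hC₀ : 0 < C₀) :
    ∃ C₁ : ℝ, ∀ t₀ : ℝ, 1 ≤ t₀ → ∀ f : ℝ → ℝ,
      (∀ t, t₀ ≤ t → DifferentiableAt ℝ f t) →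
      ContinuousOn (deriv f) (Set.Ici t₀) →
      (∀ s t, t₀ ≤ s → s ≤ t → f t ≤ f s) →
      (∀ t, t₀ ≤ t → 0 ≤ f t ∧ f t ≤ C₀ * t ^ (-(1 / γ))) →
      ∀ t₁ t₂, t₀ ≤ t₁ → t₁ ≤ t₂ →
        (∫ t in t₁..t₂, Real.sqrt (-(deriv f t)))
          ≤ C₁ * t₁ ^ (-(1 / γ - 1) / 2) := by
  set β : ℝ := (1 - 1 / γ) / 2 with hβdef
  have hγinv : 1 < 1 / γ := one_lt_one_div hγ0 hγ1
  have hβneg : β < 0 := by rw [hβdef]; linarith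
  set r : ℝ := (2 : ℝ) ^ β with hrdef
  have hr0 : 0 < r := Real.rpow_pos_of_pos (by norm_num) β
  have hr1 : r < 1 := Real.rpow_lt_one_of_one_lt_of_neg (by norm_num) hβneg
  have h1r : 0 < 1 - r := by linarith
  refine ⟨Real.sqrt C₀ * (1 / (1 - r)), ?_⟩
  intro t₀ ht₀ f hdiff hcd hmono hbound t₁ t₂ ht₁ ht₂
  have ht₀pos : (0 : ℝ) < t₀ := lt_of_lt_of_le one_pos ht₀
  have ht₁0 : (0 : ℝ) < t₁ := lt_of_lt_of_le ht₀pos ht₁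
  -- the derivative is nonpositive on `[t₀, ∞)`
  have hderiv_nonpos : ∀ t, t₀ ≤ t → deriv f t ≤ 0 := by
    intro t ht
    have hslope : Tendsto (slope f t) (𝓝[>] t) (𝓝 (deriv f t)) :=
      (hasDerivAt_iff_tendsto_slope.mp (hdiff t ht).hasDerivAt).mono_left
        (nhdsWithin_mono _ fun x hx => ne_of_gt hx)
    refine le_of_tendsto hslope ?_
    filter_upwards [self_mem_nhdsWithin] with x hx
    have hx' : t < x := hx
    have : f x ≤ f t := hmono t x ht hx'.le
    rw [slope_def_field]
    exact div_nonpos_of_nonpos_of_nonneg (by linarith) (by linarith)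
  -- integrability of the integrand
  have hInt : ∀ a b, t₀ ≤ a → a ≤ b →
      IntervalIntegrable (fun t => Real.sqrt (-(deriv f t))) volume a b := by
    intro a b ha hab
    exact ContinuousOn.intervalIntegrable_of_Icc hab
      ((hcd.mono fun x hx => le_trans ha hx.1).neg.sqrt)
  -- key single dyadic piece bound
  have key : ∀ a b, t₀ ≤ a → a ≤ b → b ≤ 2 * a →
      (∫ t in a..b, Real.sqrt (-(deriv f t))) ≤ Real.sqrt C₀ * a ^ β := by
    intro a b ha hab hb2
    have ha0 : (0 : ℝ) < a := lt_of_lt_of_le ht₀pos ha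
    set c : ℝ := Real.sqrt (C₀ * a ^ (-(1 / γ) - 1)) with hcdef
    have hapow : (0 : ℝ) < a ^ (-(1 / γ) - 1) := Real.rpow_pos_of_pos ha0 _
    have hcpos : 0 < c := Real.sqrt_pos.2 (by positivity)
    have hc2 : c ^ 2 = C₀ * a ^ (-(1 / γ) - 1) := Real.sq_sqrt (by positivity)
    have hsub : Icc a b ⊆ Ici t₀ := fun x hx => le_trans ha hx.1
    -- pointwise AM-GM bound
    have hptwise : ∀ t ∈ Icc a b,
        Real.sqrt (-(deriv f t)) ≤ (-(deriv f t) + c ^ 2) / (2 * c) := by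
      intro t ht
      have hx0 : 0 ≤ -(deriv f t) := neg_nonneg.2 (hderiv_nonpos t (hsub ht))
      have h1 : Real.sqrt (-(deriv f t)) ^ 2 = -(deriv f t) := Real.sq_sqrt hx0
      have h2 := sq_nonneg (Real.sqrt (-(deriv f t)) - c)
      rw [le_div_iff₀ (by linarith : (0:ℝ) < 2 * c)]
      nlinarith [h1, h2]
    have hg2int : IntervalIntegrable (fun t => (-(deriv f t) + c ^ 2) / (2 * c)) volume a b :=
      ContinuousOn.intervalIntegrable_of_Icc hab
        (((hcd.mono hsub).neg.add continuousOn_const).div_const _)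
    have hmono' := integral_mono_on hab (hInt a b ha hab) hg2int hptwise
    have hFTC : (∫ t in a..b, deriv f t) = f b - f a := by
      apply integral_deriv_eq_sub
      · intro x hx
        rw [uIcc_of_le hab] at hx
        exact hdiff x (le_trans ha hx.1)
      · exact ContinuousOn.intervalIntegrable_of_Icc hab (hcd.mono hsub)
    have hnegint : IntervalIntegrable (fun t => -(deriv f t)) volume a b :=
      ContinuousOn.intervalIntegrable_of_Icc hab (hcd.mono hsub).neg
    have hval : (∫ t in a..b, (-(deriv f t) + c ^ 2) / (2 * c))
        = ((f a - f b) + c ^ 2 * (b - a)) / (2 * c) := by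
      rw [intervalIntegral.integral_div, integral_add hnegint intervalIntegrable_const, intervalIntegral.integral_neg, hFTC,
        intervalIntegral.integral_const]
      simp only [smul_eq_mul]
      ring
    have hca : c ^ 2 * a = C₀ * a ^ (-(1 / γ)) := by
      rw [hc2, mul_assoc, ← Real.rpow_add_one ha0.ne']
      norm_num
    have hfa := (hbound a ha).2
    have hfb := (hbound b (le_trans ha hab)).1
    have hXY : (f a - f b) + c ^ 2 * (b - a) ≤ c ^ 2 * a + c ^ 2 * a := by
      have h3 : 0 ≤ c ^ 2 * (2 * a - b) := mul_nonneg (sq_nonneg c) (by linarith)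
      nlinarith [hfa, hfb, hca]
    have hceq : c = Real.sqrt C₀ * a ^ ((-(1 / γ) - 1) / 2) := by
      rw [hcdef, Real.sqrt_mul hC₀.le]
      congr 1
      rw [Real.sqrt_eq_rpow, ← Real.rpow_mul ha0.le]
      congr 1
      ring
    calc (∫ t in a..b, Real.sqrt (-(deriv f t)))
        ≤ ((f a - f b) + c ^ 2 * (b - a)) / (2 * c) := hmono'.trans hval.le
      _ ≤ (c ^ 2 * a + c ^ 2 * a) / (2 * c) :=
          div_le_div_of_nonneg_right hXY (by linarith)
      _ = c * a := by field_simp; ring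
      _ = Real.sqrt C₀ * a ^ β := by
          rw [hceq, mul_assoc, ← Real.rpow_add_one ha0.ne',
            show (-(1 / γ) - 1) / 2 + 1 = β by rw [hβdef]; ring]
  -- dyadic induction
  have claim : ∀ N : ℕ, ∀ u, t₁ ≤ u → u ≤ 2 ^ N * t₁ →
      (∫ t in t₁..u, Real.sqrt (-(deriv f t))) ≤
        Real.sqrt C₀ * t₁ ^ β * ∑ k ∈ Finset.range N, r ^ k := by
    intro N
    induction N with
    | zero =>
      intro u hu hu2
      norm_num at hu2
      have : u = t₁ := le_antisymm hu2 hu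
      rw [this]
      simp
    | succ N ih =>
      intro u hu hu2
      rcases le_or_gt u (2 ^ N * t₁) with h | h
      · refine (ih u hu h).trans ?_
        refine mul_le_mul_of_nonneg_left ?_
          (mul_nonneg (Real.sqrt_nonneg _) (Real.rpow_nonneg ht₁0.le _))
        exact Finset.sum_le_sum_of_subset_of_nonneg
          (Finset.range_subset_range.2 (Nat.le_succ N)) (fun i _ _ => pow_nonneg hr0.le i)
      · set m := (2 : ℝ) ^ N * t₁ with hm
        have h2N1 : (1 : ℝ) ≤ 2 ^ N := one_le_pow₀ one_le_two
        have hm1 : t₁ ≤ m := le_mul_of_one_le_left ht₁0.le h2N1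
        have hm0 : t₀ ≤ m := le_trans ht₁ hm1
        have hu2m : u ≤ 2 * m := by
          have : (2 : ℝ) ^ (N + 1) * t₁ = 2 * m := by rw [hm, pow_succ]; ring
          linarith
        have hsplit := integral_add_adjacent_intervals
          (hInt t₁ m ht₁ hm1) (hInt m u hm0 h.le)
        have h1 := ih m hm1 le_rfl
        have h2 : (∫ t in m..u, Real.sqrt (-(deriv f t))) ≤ Real.sqrt C₀ * m ^ β :=
          key m u hm0 h.le hu2m
        have hmβ : m ^ β = r ^ N * t₁ ^ β := by
          rw [hm, Real.mul_rpow (by positivity) ht₁0.le]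
          congr 1
          rw [hrdef, ← Real.rpow_natCast (2 : ℝ) N, ← Real.rpow_natCast ((2 : ℝ) ^ β) N,
            ← Real.rpow_mul (by norm_num : (0 : ℝ) ≤ 2),
            ← Real.rpow_mul (by norm_num : (0 : ℝ) ≤ 2), mul_comm]
        rw [← hsplit, Finset.sum_range_succ]
        have := add_le_add h1 (h2.trans_eq (by rw [hmβ]))
        calc (∫ t in t₁..m, Real.sqrt (-(deriv f t)))
              + (∫ t in m..u, Real.sqrt (-(deriv f t)))
            ≤ Real.sqrt C₀ * t₁ ^ β * (∑ k ∈ Finset.range N, r ^ k)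
              + Real.sqrt C₀ * (r ^ N * t₁ ^ β) := this
          _ = Real.sqrt C₀ * t₁ ^ β * ((∑ k ∈ Finset.range N, r ^ k) + r ^ N) := by ring
  -- conclusion
  obtain ⟨N, hN⟩ := pow_unbounded_of_one_lt t₂ (one_lt_two : (1 : ℝ) < 2)
  have ht₁1 : (1 : ℝ) ≤ t₁ := le_trans ht₀ ht₁
  have h2N : t₂ ≤ 2 ^ N * t₁ := hN.le.trans (le_mul_of_one_le_right (by positivity) ht₁1)
  have hmain := claim N t₂ ht₂ h2N
  have hsumle : (∑ k ∈ Finset.range N, r ^ k) ≤ 1 / (1 - r) := by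
    rw [geom_sum_eq hr1.ne]
    have heq : (r ^ N - 1) / (r - 1) = (1 - r ^ N) / (1 - r) := by
      rw [div_eq_div_iff (sub_ne_zero.2 hr1.ne) h1r.ne']
      ring
    rw [heq]
    have hle1 : 1 - r ^ N ≤ 1 := by nlinarith [pow_nonneg hr0.le N]
    exact div_le_div_of_nonneg_right hle1 h1r.le
  calc (∫ t in t₁..t₂, Real.sqrt (-(deriv f t)))
      ≤ Real.sqrt C₀ * t₁ ^ β * ∑ k ∈ Finset.range N, r ^ k := hmain
    _ ≤ Real.sqrt C₀ * t₁ ^ β * (1 / (1 - r)) :=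
        mul_le_mul_of_nonneg_left hsumle
          (mul_nonneg (Real.sqrt_nonneg _) (Real.rpow_nonneg ht₁0.le _))
    _ = Real.sqrt C₀ * (1 / (1 - r)) * t₁ ^ (-(1 / γ - 1) / 2) := by
        rw [show -(1 / γ - 1) / 2 = β by rw [hβdef]; ring]; ring
end
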